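/- Mass conservation for the Crank–Nicolson (CN) scheme with discretized multiplicative noise: let Δt > 0, ε ∈ ℝ, let f̃_0, …, f̃_N be real numbers, let σ ≥ 1 be an integer, and let u⁰, u¹ ∈ ℂ^{N+1}. Assume that for every 0 ≤ j ≤ N one has i·(u¹_j − u⁰_j)/Δt + D₂u^{1/2}_j + |u^{1/2}_j|^{2σ}·u^{1/2}_j = ε·f̃_j·u^{1/2}_j, where u^{1/2}_j := (u⁰_j + u¹_j)/2 (extended by the Neumann conventions). Then M_dis[u¹] = M_dis[u⁰]. -/

import Mathlib

open Finset

/-- Extended mesh size `Δx_j` for `j ∈ {-1, 0, …, N}`, with the conventions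
`Δx_{-1} := Δx_0` and `Δx_N := Δx_{N-1}`. -/
noncomputable def meshDx (N : ℕ) (x : ℕ → ℝ) (j : ℤ) : ℝ :=
  if j ≤ 0 then x 1 - x 0
  else if (N : ℤ) ≤ j then x N - x (N - 1)
  else x (j.toNat + 1) - x j.toNat

/-- Neumann extension of a vector `u ∈ ℂ^{N+1}`: `u_{-1} := u_0`, `u_{N+1} := u_N`. -/
noncomputable def neumannExt (N : ℕ) (u : ℕ → ℂ) (j : ℤ) : ℂ :=
  if j ≤ 0 then u 0
  else if (N : ℤ) ≤ j then u N
  else u j.toNat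

/-- Discrete second-difference operator on the (possibly non-uniform) mesh. -/
noncomputable def D2 (N : ℕ) (x : ℕ → ℝ) (u : ℕ → ℂ) (j : ℕ) : ℂ :=
  2 * neumannExt N u ((j : ℤ) - 1) /
      ((meshDx N x ((j : ℤ) - 1) : ℂ) * ((meshDx N x ((j : ℤ) - 1) : ℂ) + (meshDx N x (j : ℤ) : ℂ)))
    - 2 * neumannExt N u (j : ℤ) / ((meshDx N x ((j : ℤ) - 1) : ℂ) * (meshDx N x (j : ℤ) : ℂ))
    + 2 * neumannExt N u ((j : ℤ) + 1) /
      (((meshDx N x ((j : ℤ) - 1) : ℂ) + (meshDx N x (j : ℤ) : ℂ)) * (meshDx N x (j : ℤ) : ℂ))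

/-- Discrete mass `M_dis[u] = (1/2)·Σ_{j=0}^{N} |u_j|²·(Δx_j + Δx_{j-1})`. -/
noncomputable def Mdis (N : ℕ) (x : ℕ → ℝ) (u : ℕ → ℂ) : ℝ :=
  (1 / 2) * ∑ j ∈ Finset.range (N + 1),
    ‖u j‖ ^ 2 * (meshDx N x (j : ℤ) + meshDx N x ((j : ℤ) - 1))

/- ### Auxiliary lemmas -/

lemma abel_sum (g b : ℕ → ℂ) (n : ℕ) :
    ∑ j ∈ Finset.range (n+1), (g (j+1) - g j) * b j
      = g (n+1) * b n - g 0 * b 0 - ∑ j ∈ Finset.range n, g (j+1) * (b (j+1) - b j) := by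
  induction n with
  | zero => simp; ring
  | succ n ih =>
      rw [Finset.sum_range_succ, ih, Finset.sum_range_succ]
      ring

lemma im_time (a b : ℂ) (d t : ℝ) (ht : t ≠ 0) :
    (Complex.I * (b - a) / (t:ℂ) * (starRingEnd ℂ ((a+b)/2)) * (d:ℂ)).im
      = (‖b‖^2 - ‖a‖^2) / 2 * d / t := by
  have h2re : (2:ℂ).re = 2 := rfl
  have h2im : (2:ℂ).im = 0 := rfl
  simp only [Complex.sq_norm, Complex.normSq_apply,
    Complex.div_im, Complex.mul_im, Complex.mul_re, Complex.I_re, Complex.I_im,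
    Complex.sub_re, Complex.sub_im, Complex.add_re, Complex.add_im,
    Complex.ofReal_re, Complex.ofReal_im, map_div₀, Complex.conj_re, Complex.conj_im,
    Complex.div_re, h2re, h2im]
  field_simp
  ring

lemma im_real_mul (r : ℝ) (z : ℂ) (d : ℝ) : ((r:ℂ) * z * (starRingEnd ℂ z) * (d:ℂ)).im = 0 := by
  have : (r:ℂ) * z * (starRingEnd ℂ z) * (d:ℂ) = ((r * Complex.normSq z * d : ℝ) : ℂ) := by
    push_cast
    rw [mul_assoc (r:ℂ) z, Complex.mul_conj]
  rw [this, Complex.ofReal_im]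

lemma im_div_conj (z : ℂ) (d : ℝ) : (z / (d:ℂ) * (starRingEnd ℂ z)).im = 0 := by
  rw [div_mul_eq_mul_div, Complex.mul_conj]
  rw [show ((Complex.normSq z : ℂ)) / (d:ℂ) = ((Complex.normSq z / d : ℝ):ℂ) by push_cast; ring]
  exact Complex.ofReal_im _

/-- Discrete flux used in summation by parts. -/
noncomputable def cnFlux (W : ℕ → ℂ) (D : ℕ → ℝ) : ℕ → ℂ
  | 0 => 0
  | (k+1) => (W (k+1) - W k) / (D k : ℂ)

/-- Mass conservation for the Crank–Nicolson (CN) scheme with discretized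
multiplicative noise. -/
theorem cn_scheme_mass_conservation
    (N : ℕ) (hN : 1 ≤ N) (x : ℕ → ℝ) (hx : ∀ j, j < N → x j < x (j + 1))
    (Δt : ℝ) (hΔt : 0 < Δt) (ε : ℝ) (ftilde : ℕ → ℝ)
    (σ : ℕ) (hσ : 1 ≤ σ) (u0 u1 : ℕ → ℂ)
    (hscheme : ∀ j ≤ N,
      Complex.I * (u1 j - u0 j) / (Δt : ℂ)
        + D2 N x (fun k => (u0 k + u1 k) / 2) j
        + ((‖(u0 j + u1 j) / 2‖ ^ (2 * σ) : ℝ) : ℂ) * ((u0 j + u1 j) / 2)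
      = (ε : ℂ) * (ftilde j : ℂ) * ((u0 j + u1 j) / 2)) :
    Mdis N x u1 = Mdis N x u0 := by
  classical
  set w : ℕ → ℂ := fun k => (u0 k + u1 k) / 2 with hw
  set W : ℕ → ℂ := fun j => neumannExt N w (j : ℤ) with hWdef
  set D : ℕ → ℝ := fun j => meshDx N x (j : ℤ) with hDdef
  set c : ℕ → ℝ := fun j => D j + D (j - 1) with hcdef
  -- shift lemmas
  have hDshift : ∀ j : ℕ, meshDx N x ((j:ℤ) - 1) = D (j - 1) := by
    intro j
    cases j with
    | zero => simp only [hDdef, meshDx, Nat.zero_sub]; norm_num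
    | succ k =>
        have h1 : ((k+1:ℕ):ℤ) - 1 = (k:ℤ) := by push_cast; ring
        simp only [h1, hDdef, Nat.add_sub_cancel]
  have hWshift : ∀ j : ℕ, neumannExt N w ((j:ℤ) - 1) = W (j - 1) := by
    intro j
    cases j with
    | zero => simp only [hWdef, neumannExt, Nat.zero_sub]; norm_num
    | succ k =>
        have h1 : ((k+1:ℕ):ℤ) - 1 = (k:ℤ) := by push_cast; ring
        simp only [h1, hWdef, Nat.add_sub_cancel]
  have hWsucc : ∀ j : ℕ, neumannExt N w ((j:ℤ) + 1) = W (j + 1) := by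
    intro j
    have h1 : ((j:ℤ)) + 1 = ((j+1:ℕ):ℤ) := by push_cast; ring
    rw [h1]
  -- positivity of mesh sizes
  have hDpos : ∀ j : ℕ, j ≤ N → 0 < D j := by
    intro j hj
    simp only [hDdef, meshDx]
    by_cases h0 : (j:ℤ) ≤ 0
    · simp only [h0, if_true]
      have := hx 0 hN
      linarith
    · simp only [h0, if_false]
      by_cases hN' : (N:ℤ) ≤ (j:ℤ)
      · simp only [hN', if_true]
        have hx' := hx (N-1) (by omega)
        have : N - 1 + 1 = N := by omega
        rw [this] at hx'
        linarith
      · simp only [hN', if_false]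
        have hjlt : j < N := by exact_mod_cast (by omega : (j:ℤ) < N)
        have : (j:ℤ).toNat = j := Int.toNat_natCast j
        rw [this]
        have := hx j hjlt
        linarith
  -- values of W on 0..N
  have hWeq : ∀ j : ℕ, j ≤ N → W j = w j := by
    intro j hj
    simp only [hWdef, neumannExt]
    by_cases h0 : (j:ℤ) ≤ 0
    · have : j = 0 := by exact_mod_cast (by omega : (j:ℤ) = 0)
      simp [h0, this]
    · simp only [h0, if_false]
      by_cases hN' : (N:ℤ) ≤ (j:ℤ)
      · have : j = N := by omega
        simp [hN', this]
      · simp [hN', Int.toNat_natCast]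
  have hWtop : W (N + 1) = W N := by
    have hA : neumannExt N w ((N+1:ℕ):ℤ) = w N := by
      simp only [neumannExt]
      rw [if_neg (by push_cast; omega), if_pos (by push_cast; omega)]
    have hB : W N = w N := hWeq N le_rfl
    show neumannExt N w ((N+1:ℕ):ℤ) = W N
    rw [hA, hB]
  set g : ℕ → ℂ := cnFlux W D with hgdef
  have hg0 : g 0 = 0 := rfl
  have hgsucc : ∀ k : ℕ, g (k+1) = (W (k+1) - W k) / (D k : ℂ) := fun k => rfl
  have hgtop : g (N+1) = 0 := by rw [hgsucc, hWtop, sub_self, zero_div]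
  -- key identity
  have hkey : ∀ j : ℕ, j ≤ N → (c j : ℂ) * D2 N x w j = 2 * (g (j+1) - g j) := by
    intro j hj
    have hDj : (D j : ℂ) ≠ 0 := by
      exact_mod_cast ne_of_gt (hDpos j hj)
    have hDj1 : (D (j-1) : ℂ) ≠ 0 := by
      exact_mod_cast ne_of_gt (hDpos (j-1) (by omega))
    unfold D2
    rw [hDshift j, hWshift j, hWsucc j,
      show meshDx N x ((j:ℕ):ℤ) = D j from rfl,
      show neumannExt N w ((j:ℕ):ℤ) = W j from rfl]
    cases j with
    | zero =>
        simp only [Nat.zero_sub]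
        rw [hgsucc, hg0]
        rw [show ((c 0 : ℝ) : ℂ) = (D 0 : ℂ) + (D 0 : ℂ) by
          simp only [hcdef, Nat.zero_sub]; push_cast; ring]
        have hD0 : (D 0 : ℂ) ≠ 0 := by simpa using hDj1
        have hD0' : (D 0 : ℂ) + (D 0 : ℂ) ≠ 0 := by
          intro h
          apply hD0
          have : (2:ℂ) * (D 0 : ℂ) = 0 := by rw [two_mul]; exact h
          simpa using this
        field_simp [hD0, hD0']
        ring
    | succ k =>
        simp only [Nat.add_sub_cancel]
        rw [hgsucc, hgsucc]
        rw [show ((c (k+1) : ℝ) : ℂ) = (D (k+1) : ℂ) + (D k : ℂ) by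
          simp only [hcdef, Nat.add_sub_cancel]; push_cast; ring]
        have hDk : (D k : ℂ) ≠ 0 := by simpa [Nat.add_sub_cancel] using hDj1
        have hDk1 : (D (k+1) : ℂ) ≠ 0 := hDj
        have hDs : (D k : ℂ) + (D (k+1) : ℂ) ≠ 0 := by
          have h1 : (0:ℝ) < D k := hDpos k (by omega)
          have h2 : (0:ℝ) < D (k+1) := hDpos (k+1) hj
          have h3 : (D k + D (k+1) : ℝ) ≠ 0 := by positivity
          have := (Complex.ofReal_ne_zero).mpr h3
          push_cast at this
          exact this
        field_simp [hDk, hDk1, hDs]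
        ring
  -- the vanishing combination from the scheme
  have hzero : ∀ j ∈ Finset.range (N+1),
      (Complex.I * (u1 j - u0 j) / (Δt : ℂ)
        + ((‖w j‖ ^ (2*σ) : ℝ) : ℂ) * w j
        - (ε : ℂ) * (ftilde j : ℂ) * w j
        + D2 N x w j) * (starRingEnd ℂ (w j)) * (c j : ℂ) = 0 := by
    intro j hj
    rw [Finset.mem_range] at hj
    have h := hscheme j (by omega)
    have : Complex.I * (u1 j - u0 j) / (Δt : ℂ)
        + ((‖w j‖ ^ (2*σ) : ℝ) : ℂ) * w j
        - (ε : ℂ) * (ftilde j : ℂ) * w j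
        + D2 N x w j = 0 := by
      simp only [hw]
      linear_combination h
    rw [this, zero_mul, zero_mul]
  have hTsum : (∑ j ∈ Finset.range (N+1),
      (Complex.I * (u1 j - u0 j) / (Δt : ℂ)
        + ((‖w j‖ ^ (2*σ) : ℝ) : ℂ) * w j
        - (ε : ℂ) * (ftilde j : ℂ) * w j
        + D2 N x w j) * (starRingEnd ℂ (w j)) * (c j : ℂ)) = 0 :=
    Finset.sum_eq_zero hzero
  -- split into four sums
  have hsplit : ∑ j ∈ Finset.range (N+1),
      (Complex.I * (u1 j - u0 j) / (Δt : ℂ)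
        + ((‖w j‖ ^ (2*σ) : ℝ) : ℂ) * w j
        - (ε : ℂ) * (ftilde j : ℂ) * w j
        + D2 N x w j) * (starRingEnd ℂ (w j)) * (c j : ℂ)
    = (∑ j ∈ Finset.range (N+1), Complex.I * (u1 j - u0 j) / (Δt : ℂ) * (starRingEnd ℂ (w j)) * (c j : ℂ))
      + (∑ j ∈ Finset.range (N+1), ((‖w j‖ ^ (2*σ) : ℝ) : ℂ) * w j * (starRingEnd ℂ (w j)) * (c j : ℂ))
      - (∑ j ∈ Finset.range (N+1), ((ε * ftilde j : ℝ) : ℂ) * w j * (starRingEnd ℂ (w j)) * (c j : ℂ))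
      + (∑ j ∈ Finset.range (N+1), D2 N x w j * (starRingEnd ℂ (w j)) * (c j : ℂ)) := by
    rw [← Finset.sum_add_distrib, ← Finset.sum_sub_distrib, ← Finset.sum_add_distrib]
    apply Finset.sum_congr rfl
    intro j _
    push_cast
    ring
  -- imaginary part of the D2 sum vanishes
  have hD2im : (∑ j ∈ Finset.range (N+1), D2 N x w j * (starRingEnd ℂ (w j)) * (c j : ℂ)).im = 0 := by
    have heq : ∑ j ∈ Finset.range (N+1), D2 N x w j * (starRingEnd ℂ (w j)) * (c j : ℂ)
        = 2 * ∑ j ∈ Finset.range (N+1), (g (j+1) - g j) * (starRingEnd ℂ (W j)) := by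
      rw [Finset.mul_sum]
      apply Finset.sum_congr rfl
      intro j hj
      rw [Finset.mem_range] at hj
      have hj' : j ≤ N := by omega
      have h1 := hkey j hj'
      rw [hWeq j hj']
      calc D2 N x w j * (starRingEnd ℂ (w j)) * (c j : ℂ)
          = ((c j : ℂ) * D2 N x w j) * (starRingEnd ℂ (w j)) := by ring
        _ = (2 * (g (j+1) - g j)) * (starRingEnd ℂ (w j)) := by rw [h1]
        _ = 2 * ((g (j+1) - g j) * (starRingEnd ℂ (w j))) := by ring
    rw [heq, abel_sum, hgtop, hg0]
    have : ∀ j ∈ Finset.range N,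
        (g (j+1) * ((starRingEnd ℂ (W (j+1))) - (starRingEnd ℂ (W j)))).im = 0 := by
      intro j _
      rw [hgsucc]
      have : (starRingEnd ℂ (W (j+1))) - (starRingEnd ℂ (W j))
          = starRingEnd ℂ (W (j+1) - W j) := by rw [map_sub]
      rw [this]
      exact im_div_conj _ _
    simp only [zero_mul, sub_zero, zero_sub, mul_neg]
    rw [Complex.neg_im, Complex.mul_im, Complex.im_sum, Finset.sum_eq_zero this]
    simp
  -- imaginary parts of the nonlinear / noise sums vanish
  have hNLim : (∑ j ∈ Finset.range (N+1), ((‖w j‖ ^ (2*σ) : ℝ) : ℂ) * w j * (starRingEnd ℂ (w j)) * (c j : ℂ)).im = 0 := by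
    rw [Complex.im_sum]
    exact Finset.sum_eq_zero fun j _ => im_real_mul _ _ _
  have hFim : (∑ j ∈ Finset.range (N+1), ((ε * ftilde j : ℝ) : ℂ) * w j * (starRingEnd ℂ (w j)) * (c j : ℂ)).im = 0 := by
    rw [Complex.im_sum]
    exact Finset.sum_eq_zero fun j _ => im_real_mul _ _ _
  -- imaginary part of the time-derivative sum
  have hTim : (∑ j ∈ Finset.range (N+1), Complex.I * (u1 j - u0 j) / (Δt : ℂ) * (starRingEnd ℂ (w j)) * (c j : ℂ)).im
      = ∑ j ∈ Finset.range (N+1), (‖u1 j‖^2 - ‖u0 j‖^2) / 2 * (c j) / Δt := by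
    rw [Complex.im_sum]
    apply Finset.sum_congr rfl
    intro j _
    exact im_time (u0 j) (u1 j) (c j) Δt (ne_of_gt hΔt)
  -- put it together
  have hmain : ∑ j ∈ Finset.range (N+1), (‖u1 j‖^2 - ‖u0 j‖^2) / 2 * (c j) / Δt = 0 := by
    have h := congrArg Complex.im hTsum
    rw [hsplit] at h
    rw [Complex.add_im, Complex.sub_im, Complex.add_im, hD2im, hNLim, hFim, hTim] at h
    simpa using h
  -- conclude
  have hsum : ∑ j ∈ Finset.range (N+1), ‖u1 j‖^2 * (c j)
      = ∑ j ∈ Finset.range (N+1), ‖u0 j‖^2 * (c j) := by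
    have : ∑ j ∈ Finset.range (N+1), ((‖u1 j‖^2 * c j) - (‖u0 j‖^2 * c j)) = 0 := by
      have := hmain
      rw [← Finset.sum_div] at this
      have h2 : ∑ j ∈ Finset.range (N+1), (‖u1 j‖^2 - ‖u0 j‖^2) / 2 * (c j) = 0 := by
        exact (div_eq_zero_iff.mp this).resolve_right (ne_of_gt hΔt)
      calc ∑ j ∈ Finset.range (N+1), ((‖u1 j‖^2 * c j) - (‖u0 j‖^2 * c j))
          = 2 * ∑ j ∈ Finset.range (N+1), (‖u1 j‖^2 - ‖u0 j‖^2) / 2 * (c j) := by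
            rw [Finset.mul_sum]; apply Finset.sum_congr rfl; intro j _; ring
        _ = 0 := by rw [h2]; ring
    rw [Finset.sum_sub_distrib] at this
    linarith
  unfold Mdis
  have hcongr : ∀ (u : ℕ → ℂ), ∑ j ∈ Finset.range (N+1),
      ‖u j‖ ^ 2 * (meshDx N x (j : ℤ) + meshDx N x ((j : ℤ) - 1))
      = ∑ j ∈ Finset.range (N+1), ‖u j‖^2 * (c j) := by
    intro u
    apply Finset.sum_congr rfl
    intro j _
    rw [hDshift j]
  rw [hcongr u1, hcongr u0, hsum]
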